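/- Let ℓ ≥ 1 and θ ∈ ℂ^(ℤ/ℓℤ) with Σ_{i ∈ ℤ/ℓℤ} θ_i ≠ 0. Let Σ_θ ⊆ ℕ^(ℤ/ℓℤ) be the set of dimension vectors of simple θ-representations of the double cyclic quiver. Then Σ_θ is ℤ-linearly independent: if d_1, …, d_k ∈ Σ_θ are pairwise distinct and n_1, …, n_k ∈ ℤ satisfy n_1·d_1 + ⋯ + n_k·d_k = 0 in ℤ^(ℤ/ℓℤ), then n_1 = ⋯ = n_k = 0. -/

import Mathlib

namespace CM

/-- A `θ`-representation of the double cyclic quiver with `ℓ` vertices and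
dimension vector `d`.  The moment map relation at the vertex `i + 1` reads
`X_{i+1} ∘ Y_{i+1} - Y_i ∘ X_i = θ_{i+1} · id`; quantifying over all `i` gives the
relation at every vertex. -/
structure Rep (ℓ : ℕ) (θ : ZMod ℓ → ℂ) (d : ZMod ℓ → ℕ) where
  X : ∀ i : ZMod ℓ, (Fin (d (i + 1)) → ℂ) →ₗ[ℂ] (Fin (d i) → ℂ)
  Y : ∀ i : ZMod ℓ, (Fin (d i) → ℂ) →ₗ[ℂ] (Fin (d (i + 1)) → ℂ)
  rel : ∀ i : ZMod ℓ,
    X (i + 1) ∘ₗ Y (i + 1) - Y i ∘ₗ X i = θ (i + 1) • LinearMap.id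

/-- A subrepresentation: a family of subspaces stable under all the maps. -/
structure Subrep {ℓ : ℕ} {θ : ZMod ℓ → ℂ} {d : ZMod ℓ → ℕ} (R : Rep ℓ θ d) where
  U : ∀ i : ZMod ℓ, Submodule ℂ (Fin (d i) → ℂ)
  hX : ∀ i : ZMod ℓ, ∀ v ∈ U (i + 1), R.X i v ∈ U i
  hY : ∀ i : ZMod ℓ, ∀ v ∈ U i, R.Y i v ∈ U (i + 1)

/-- A representation is simple if `d ≠ 0` and its only subrepresentations are `0` and itself. -/
def IsSimple {ℓ : ℕ} {θ : ZMod ℓ → ℂ} {d : ZMod ℓ → ℕ} (R : Rep ℓ θ d) : Prop :=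
  (∃ i, d i ≠ 0) ∧ ∀ S : Subrep R, (∀ i, S.U i = ⊥) ∨ (∀ i, S.U i = ⊤)

open LinearMap Module

variable {ℓ : ℕ} {θ : ZMod ℓ → ℂ}

/-- Taking traces in the moment map relation and summing over all vertices. -/
lemma theta_dot_dim [NeZero ℓ] (d : ZMod ℓ → ℕ) (R : Rep ℓ θ d) :
    ∑ i : ZMod ℓ, θ i * d i = 0 := by
  set t : ZMod ℓ → ℂ := fun i => trace ℂ (Fin (d i) → ℂ) (R.X i ∘ₗ R.Y i) with ht
  have h : ∀ i : ZMod ℓ, t (i + 1) - t i = θ (i + 1) * d (i + 1) := by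
    intro i
    have h1 := congrArg (trace ℂ (Fin (d (i + 1)) → ℂ)) (R.rel i)
    have h2 : trace ℂ (Fin (d (i+1)) → ℂ) (R.Y i ∘ₗ R.X i)
        = trace ℂ (Fin (d i) → ℂ) (R.X i ∘ₗ R.Y i) := trace_comp_comm' _ _
    simp only [map_sub, map_smul, trace_id, Module.finrank_fin_fun, smul_eq_mul] at h1
    rw [h2] at h1
    simpa [ht] using h1
  have hsum := Finset.sum_congr rfl (fun i (_ : i ∈ Finset.univ) => h i)
  have e1 : ∑ i : ZMod ℓ, t (i + 1) = ∑ i : ZMod ℓ, t i :=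
    Fintype.sum_equiv (Equiv.addRight 1) _ _ (fun i => rfl)
  have e2 : ∑ i : ZMod ℓ, θ (i + 1) * d (i + 1) = ∑ i : ZMod ℓ, θ i * d i :=
    Fintype.sum_equiv (Equiv.addRight 1) _ _ (fun i => rfl)
  rw [Finset.sum_sub_distrib, e1, sub_self] at hsum
  rw [← e2, ← hsum]

/-- Schur: a homomorphism between simple representations of distinct dimension
vectors vanishes. -/
lemma hom_eq_zero {dM dN : ZMod ℓ → ℕ} {M : Rep ℓ θ dM} {N : Rep ℓ θ dN}
    (hM : IsSimple M) (hN : IsSimple N) (hne : dM ≠ dN)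
    (φ : ∀ i : ZMod ℓ, (Fin (dM i) → ℂ) →ₗ[ℂ] (Fin (dN i) → ℂ))
    (hX : ∀ i, φ i ∘ₗ M.X i = N.X i ∘ₗ φ (i + 1))
    (hY : ∀ i, φ (i + 1) ∘ₗ M.Y i = N.Y i ∘ₗ φ i) :
    ∀ i, φ i = 0 := by
  rcases hM.2 {
    U := fun i => LinearMap.ker (φ i)
    hX := by
      intro i v hv
      have hv' : φ (i + 1) v = 0 := hv
      have : φ i (M.X i v) = N.X i (φ (i + 1) v) := by
        rw [← comp_apply, hX i, comp_apply]
      simp only [LinearMap.mem_ker, this, hv', map_zero]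
    hY := by
      intro i v hv
      have hv' : φ i v = 0 := hv
      have : φ (i + 1) (M.Y i v) = N.Y i (φ i v) := by
        rw [← comp_apply, hY i, comp_apply]
      simp only [LinearMap.mem_ker, this, hv', map_zero] } with hbot | htop
  · -- kernels are ⊥ : each φ i is injective
    rcases hN.2 {
      U := fun i => LinearMap.range (φ i)
      hX := by
        rintro i v ⟨w, rfl⟩
        exact ⟨M.X i w, by rw [← comp_apply, hX i, comp_apply]⟩
      hY := by
        rintro i v ⟨w, rfl⟩
        exact ⟨M.Y i w, by rw [← comp_apply, hY i, comp_apply]⟩ } with h0 | h1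
    · intro i
      exact LinearMap.range_eq_bot.mp (h0 i)
    · exfalso
      apply hne
      funext i
      have hbij : Function.Bijective (φ i) :=
        ⟨LinearMap.ker_eq_bot.mp (hbot i), LinearMap.range_eq_top.mp (h1 i)⟩
      have := (LinearEquiv.ofBijective (φ i) hbij).finrank_eq
      simpa [Module.finrank_fin_fun] using this
  · intro i
    exact LinearMap.ker_eq_top.mp (htop i)

/-- The cyclic trace identity used in the orthogonality computation. -/
lemma key_local {n1 n2 m1 m2 : ℕ}
    (x : (Fin n2 → ℂ) →ₗ[ℂ] (Fin n1 → ℂ)) (y : (Fin n1 → ℂ) →ₗ[ℂ] (Fin n2 → ℂ))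
    (u : (Fin m2 → ℂ) →ₗ[ℂ] (Fin m1 → ℂ)) (v : (Fin m1 → ℂ) →ₗ[ℂ] (Fin m2 → ℂ))
    (a : (Fin n1 → ℂ) →ₗ[ℂ] (Fin m1 → ℂ)) (a' : (Fin n2 → ℂ) →ₗ[ℂ] (Fin m2 → ℂ))
    (b : (Fin m1 → ℂ) →ₗ[ℂ] (Fin n1 → ℂ)) (b' : (Fin m2 → ℂ) →ₗ[ℂ] (Fin n2 → ℂ)) :
    trace ℂ (Fin n2 → ℂ) ((b' ∘ₗ v - y ∘ₗ b) ∘ₗ (a ∘ₗ x - u ∘ₗ a'))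
      - trace ℂ (Fin n1 → ℂ) ((b ∘ₗ u - x ∘ₗ b') ∘ₗ (a' ∘ₗ y - v ∘ₗ a))
    = (trace ℂ (Fin n1 → ℂ) (b ∘ₗ (u ∘ₗ (v ∘ₗ a)))
        - trace ℂ (Fin n1 → ℂ) (b ∘ₗ (a ∘ₗ (x ∘ₗ y))))
      - (trace ℂ (Fin n2 → ℂ) (b' ∘ₗ (v ∘ₗ (u ∘ₗ a')))
        - trace ℂ (Fin n2 → ℂ) (b' ∘ₗ (a' ∘ₗ (y ∘ₗ x)))) := by
  have s1 : trace ℂ (Fin n2 → ℂ) (y ∘ₗ (b ∘ₗ (a ∘ₗ x)))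
      = trace ℂ (Fin n1 → ℂ) (b ∘ₗ (a ∘ₗ (x ∘ₗ y))) := by
    rw [trace_comp_comm' (b ∘ₗ (a ∘ₗ x)) y]
    simp only [LinearMap.comp_assoc]
  have s2 : trace ℂ (Fin n2 → ℂ) (y ∘ₗ (b ∘ₗ (u ∘ₗ a')))
      = trace ℂ (Fin n1 → ℂ) (b ∘ₗ (u ∘ₗ (a' ∘ₗ y))) := by
    rw [trace_comp_comm' (b ∘ₗ (u ∘ₗ a')) y]
    simp only [LinearMap.comp_assoc]
  have s3 : trace ℂ (Fin n1 → ℂ) (x ∘ₗ (b' ∘ₗ (a' ∘ₗ y)))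
      = trace ℂ (Fin n2 → ℂ) (b' ∘ₗ (a' ∘ₗ (y ∘ₗ x))) := by
    rw [trace_comp_comm' (b' ∘ₗ (a' ∘ₗ y)) x]
    simp only [LinearMap.comp_assoc]
  have s4 : trace ℂ (Fin n1 → ℂ) (x ∘ₗ (b' ∘ₗ (v ∘ₗ a)))
      = trace ℂ (Fin n2 → ℂ) (b' ∘ₗ (v ∘ₗ (a ∘ₗ x))) := by
    rw [trace_comp_comm' (b' ∘ₗ (v ∘ₗ a)) x]
    simp only [LinearMap.comp_assoc]
  simp only [LinearMap.comp_sub, LinearMap.sub_comp, map_sub, LinearMap.comp_assoc]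
  rw [← s1, ← s2, ← s3, ← s4]
  ring

abbrev Emod (ℓ : ℕ) (dM dN : ZMod ℓ → ℕ) :=
  ∀ i : ZMod ℓ, (Fin (dM i) → ℂ) →ₗ[ℂ] (Fin (dN i) → ℂ)

abbrev Fmod (ℓ : ℕ) (dM dN : ZMod ℓ → ℕ) :=
  (∀ i : ZMod ℓ, (Fin (dM (i + 1)) → ℂ) →ₗ[ℂ] (Fin (dN i) → ℂ))
  × (∀ i : ZMod ℓ, (Fin (dM i) → ℂ) →ₗ[ℂ] (Fin (dN (i + 1)) → ℂ))

variable [NeZero ℓ] {dM dN : ZMod ℓ → ℕ}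

noncomputable def cmap (M : Rep ℓ θ dM) (N : Rep ℓ θ dN) :
    Emod ℓ dM dN →ₗ[ℂ] Fmod ℓ dM dN where
  toFun φ := (fun i => φ i ∘ₗ M.X i - N.X i ∘ₗ φ (i + 1),
              fun i => φ (i + 1) ∘ₗ M.Y i - N.Y i ∘ₗ φ i)
  map_add' φ ψ := by
    refine Prod.ext ?_ ?_ <;> funext i <;>
      simp only [Prod.fst_add, Prod.snd_add, Pi.add_apply, LinearMap.add_comp,
        LinearMap.comp_add] <;> abel
  map_smul' c φ := by
    refine Prod.ext ?_ ?_ <;> funext i <;>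
      simp only [Prod.smul_fst, Prod.smul_snd, Pi.smul_apply, LinearMap.smul_comp,
        LinearMap.comp_smul, smul_sub, RingHom.id_apply]

noncomputable def pairing (ℓ : ℕ) [NeZero ℓ] (dM dN : ZMod ℓ → ℕ) :
    Fmod ℓ dM dN →ₗ[ℂ] Fmod ℓ dN dM →ₗ[ℂ] ℂ :=
  LinearMap.mk₂ ℂ
    (fun x ξ => (∑ i : ZMod ℓ, trace ℂ (Fin (dM (i + 1)) → ℂ) (ξ.2 i ∘ₗ x.1 i))
      - ∑ i : ZMod ℓ, trace ℂ (Fin (dM i) → ℂ) (ξ.1 i ∘ₗ x.2 i))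
    (by
      intro x y ξ
      simp only [Prod.fst_add, Prod.snd_add, Pi.add_apply, LinearMap.comp_add, map_add,
        Finset.sum_add_distrib]
      ring)
    (by
      intro c x ξ
      simp only [Prod.smul_fst, Prod.smul_snd, Pi.smul_apply, LinearMap.comp_smul, map_smul,
        smul_eq_mul, ← Finset.mul_sum]
      ring)
    (by
      intro x ξ η
      simp only [Prod.fst_add, Prod.snd_add, Pi.add_apply, LinearMap.add_comp, map_add,
        Finset.sum_add_distrib]
      ring)
    (by
      intro c x ξ
      simp only [Prod.smul_fst, Prod.smul_snd, Pi.smul_apply, LinearMap.smul_comp, map_smul,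
        smul_eq_mul, ← Finset.mul_sum]
      ring)

lemma trace_pi {n : ℕ} (T : (Fin n → ℂ) →ₗ[ℂ] (Fin n → ℂ)) :
    trace ℂ (Fin n → ℂ) T = ∑ i, T (Pi.single i 1) i := by
  rw [trace_eq_matrix_trace ℂ (Pi.basisFun ℂ (Fin n)), LinearMap.toMatrix_eq_toMatrix']
  rw [Matrix.trace]
  refine Finset.sum_congr rfl (fun i _ => ?_)
  rw [Matrix.diag_apply, LinearMap.toMatrix'_apply]

lemma trace_nondeg {a b : ℕ} (g : (Fin b → ℂ) →ₗ[ℂ] (Fin a → ℂ))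
    (h : ∀ f : (Fin a → ℂ) →ₗ[ℂ] (Fin b → ℂ), trace ℂ (Fin a → ℂ) (g ∘ₗ f) = 0) :
    g = 0 := by
  have key : ∀ k j, g (Pi.single k 1) j = 0 := by
    intro k j
    have h1 := h (((LinearMap.proj j : (Fin a → ℂ) →ₗ[ℂ] ℂ)).smulRight (Pi.single k 1))
    rw [trace_pi] at h1
    have h2 : ∀ i : Fin a,
        (g ∘ₗ ((LinearMap.proj j : (Fin a → ℂ) →ₗ[ℂ] ℂ)).smulRight (Pi.single k 1))
          (Pi.single i 1) i
        = (if j = i then 1 else 0) * g (Pi.single k 1) i := by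
      intro i
      by_cases hji : j = i
      · subst hji
        simp
      · simp [Pi.single_apply, hji]
    rw [Finset.sum_congr rfl (fun i _ => h2 i)] at h1
    simpa using h1
  apply (Pi.basisFun ℂ (Fin b)).ext
  intro k
  rw [Pi.basisFun_apply, LinearMap.zero_apply]
  funext j
  simpa using key k j

lemma pairing_nondeg (ξ : Fmod ℓ dN dM)
    (h : ∀ x : Fmod ℓ dM dN, pairing ℓ dM dN x ξ = 0) : ξ = 0 := by
  have h2 : ∀ i₀, ξ.2 i₀ = 0 := by
    intro i₀
    apply trace_nondeg
    intro f
    have h1 := h (Pi.single i₀ f, 0)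
    simp only [pairing, LinearMap.mk₂_apply, Pi.zero_apply, LinearMap.comp_zero, map_zero,
      Finset.sum_const_zero, sub_zero] at h1
    rw [Finset.sum_eq_single i₀ (fun i _ hne => by rw [Pi.single_eq_of_ne hne]; simp)
      (fun habs => absurd (Finset.mem_univ i₀) habs)] at h1
    rw [Pi.single_eq_same] at h1
    exact h1
  have h1 : ∀ i₀, ξ.1 i₀ = 0 := by
    intro i₀
    apply trace_nondeg
    intro f
    have h1 := h (0, Pi.single i₀ f)
    simp only [pairing, LinearMap.mk₂_apply, Pi.zero_apply, LinearMap.comp_zero, map_zero,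
      Finset.sum_const_zero, zero_sub, neg_eq_zero] at h1
    rw [Finset.sum_eq_single i₀ (fun i _ hne => by rw [Pi.single_eq_of_ne hne]; simp)
      (fun habs => absurd (Finset.mem_univ i₀) habs)] at h1
    rw [Pi.single_eq_same] at h1
    exact h1
  have : ξ = (ξ.1, ξ.2) := rfl
  rw [this]
  rw [funext h1, funext h2]
  rfl

/-- Orthogonality: the images of the two intertwiner-difference maps are orthogonal
for the trace pairing; this is where the moment map relations enter. -/
lemma orth (M : Rep ℓ θ dM) (N : Rep ℓ θ dN) (φ : Emod ℓ dM dN) (ψ : Emod ℓ dN dM) :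
    pairing ℓ dM dN (cmap M N φ) (cmap N M ψ) = 0 := by
  simp only [pairing, cmap, LinearMap.mk₂_apply, LinearMap.coe_mk, AddHom.coe_mk]
  rw [← Finset.sum_sub_distrib]
  set A : ZMod ℓ → ℂ := fun i =>
    trace ℂ (Fin (dM i) → ℂ) (ψ i ∘ₗ (N.X i ∘ₗ (N.Y i ∘ₗ φ i)))
      - trace ℂ (Fin (dM i) → ℂ) (ψ i ∘ₗ (φ i ∘ₗ (M.X i ∘ₗ M.Y i))) with hA
  have step : ∀ i : ZMod ℓ,
      trace ℂ (Fin (dM (i+1)) → ℂ)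
          ((ψ (i+1) ∘ₗ N.Y i - M.Y i ∘ₗ ψ i) ∘ₗ (φ i ∘ₗ M.X i - N.X i ∘ₗ φ (i+1)))
        - trace ℂ (Fin (dM i) → ℂ)
          ((ψ i ∘ₗ N.X i - M.X i ∘ₗ ψ (i+1)) ∘ₗ (φ (i+1) ∘ₗ M.Y i - N.Y i ∘ₗ φ i))
      = A i - A (i + 1) := by
    intro i
    have hk := key_local (M.X i) (M.Y i) (N.X i) (N.Y i) (φ i) (φ (i+1)) (ψ i) (ψ (i+1))
    rw [hk]
    have hNrel : N.X (i+1) ∘ₗ (N.Y (i+1) ∘ₗ φ (i+1))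
        = θ (i+1) • φ (i+1) + N.Y i ∘ₗ (N.X i ∘ₗ φ (i+1)) := by
      rw [← LinearMap.comp_assoc, eq_add_of_sub_eq (N.rel i), LinearMap.add_comp,
        LinearMap.smul_comp, LinearMap.id_comp, LinearMap.comp_assoc]
    have hMrel : φ (i+1) ∘ₗ (M.X (i+1) ∘ₗ M.Y (i+1))
        = θ (i+1) • φ (i+1) + φ (i+1) ∘ₗ (M.Y i ∘ₗ M.X i) := by
      rw [eq_add_of_sub_eq (M.rel i), LinearMap.comp_add, LinearMap.comp_smul,
        LinearMap.comp_id]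
    have hAsucc : A (i + 1)
        = trace ℂ (Fin (dM (i+1)) → ℂ) (ψ (i+1) ∘ₗ (N.Y i ∘ₗ (N.X i ∘ₗ φ (i+1))))
          - trace ℂ (Fin (dM (i+1)) → ℂ) (ψ (i+1) ∘ₗ (φ (i+1) ∘ₗ (M.Y i ∘ₗ M.X i))) := by
      rw [hA]
      simp only [hNrel, hMrel, LinearMap.comp_add, map_add, LinearMap.comp_smul, map_smul]
      try ring
    rw [hAsucc, hA]
    try ring
  rw [Finset.sum_congr rfl (fun i _ => step i), Finset.sum_sub_distrib]
  have e1 : ∑ i : ZMod ℓ, A (i + 1) = ∑ i : ZMod ℓ, A i :=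
    Fintype.sum_equiv (Equiv.addRight 1) _ _ (fun i => rfl)
  rw [e1, sub_self]

lemma cmap_inj (M : Rep ℓ θ dM) (N : Rep ℓ θ dN)
    (hM : IsSimple M) (hN : IsSimple N) (hne : dM ≠ dN) :
    Function.Injective (cmap M N) := by
  rw [← LinearMap.ker_eq_bot, LinearMap.ker_eq_bot']
  intro φ hφ
  have hfst := congrArg Prod.fst hφ
  have hsnd := congrArg Prod.snd hφ
  simp only [cmap, LinearMap.coe_mk, AddHom.coe_mk] at hfst hsnd
  have hX : ∀ i, φ i ∘ₗ M.X i = N.X i ∘ₗ φ (i + 1) := by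
    intro i
    have := congrFun hfst i
    rwa [Prod.fst_zero, Pi.zero_apply, sub_eq_zero] at this
  have hY : ∀ i, φ (i + 1) ∘ₗ M.Y i = N.Y i ∘ₗ φ i := by
    intro i
    have := congrFun hsnd i
    rwa [Prod.snd_zero, Pi.zero_apply, sub_eq_zero] at this
  have := hom_eq_zero hM hN hne φ hX hY
  funext i
  simpa using this i

set_option maxHeartbeats 1000000 in
set_option synthInstance.maxHeartbeats 400000 in
/-- The key inequality: the Cartan pairing of dimension vectors of non-isomorphic
simple representations is non-positive. -/
lemma dim_ineq (M : Rep ℓ θ dM) (N : Rep ℓ θ dN) (hM : IsSimple M) (hN : IsSimple N)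
    (hne : dM ≠ dN) :
    2 * (∑ i : ZMod ℓ, dM i * dN i)
      ≤ (∑ i : ZMod ℓ, dM (i + 1) * dN i) + ∑ i : ZMod ℓ, dM i * dN (i + 1) := by
  classical
  have hfinF : FiniteDimensional ℂ (Fmod ℓ dM dN) := inferInstance
  have hfinE : FiniteDimensional ℂ (Emod ℓ dM dN) := inferInstance
  have hfinE' : FiniteDimensional ℂ (Emod ℓ dN dM) := inferInstance
  have hcinj : Function.Injective (cmap M N) := cmap_inj M N hM hN hne
  have hcinj' : Function.Injective (cmap N M) := cmap_inj N M hN hM (Ne.symm hne)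
  have hflipinj : Function.Injective (pairing ℓ dM dN).flip := by
    rw [← LinearMap.ker_eq_bot, LinearMap.ker_eq_bot']
    intro ξ h0
    exact pairing_nondeg ξ (fun x => by
      have := LinearMap.ext_iff.mp h0 x
      simpa using this)
  set W : Submodule ℂ (Fmod ℓ dM dN) := LinearMap.range (cmap M N) with hWdef
  set Φ : Emod ℓ dN dM →ₗ[ℂ] Module.Dual ℂ (Fmod ℓ dM dN) :=
    (pairing ℓ dM dN).flip ∘ₗ cmap N M with hΦdef
  have hΦinj : Function.Injective Φ := by
    rw [hΦdef, LinearMap.coe_comp]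
    exact hflipinj.comp hcinj'
  have hsub : LinearMap.range Φ ≤ W.dualAnnihilator := by
    rintro x ⟨ψ, rfl⟩
    rw [Submodule.mem_dualAnnihilator]
    rintro y ⟨φ, rfl⟩
    simpa [hΦdef, LinearMap.flip_apply] using orth M N φ ψ
  have hWrank : finrank ℂ W = finrank ℂ (Emod ℓ dM dN) :=
    ((LinearEquiv.ofInjective _ hcinj).finrank_eq).symm
  have h1 : finrank ℂ (Emod ℓ dN dM) = finrank ℂ (LinearMap.range Φ) :=
    (LinearEquiv.ofInjective _ hΦinj).finrank_eq
  have h2 : finrank ℂ (LinearMap.range Φ) ≤ finrank ℂ W.dualAnnihilator :=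
    Submodule.finrank_mono hsub
  have h3 : finrank ℂ W.dualAnnihilator = finrank ℂ (Fmod ℓ dM dN ⧸ W) :=
    (Subspace.quotEquivAnnihilator W).finrank_eq.symm
  have h4 : finrank ℂ (Fmod ℓ dM dN ⧸ W) + finrank ℂ W = finrank ℂ (Fmod ℓ dM dN) :=
    Submodule.finrank_quotient_add_finrank W
  have hE : finrank ℂ (Emod ℓ dM dN) = ∑ i : ZMod ℓ, dM i * dN i := by
    rw [Module.finrank_pi_fintype]
    exact Finset.sum_congr rfl fun i _ => by
      rw [Module.finrank_linearMap, Module.finrank_fin_fun, Module.finrank_fin_fun]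
  have hE' : finrank ℂ (Emod ℓ dN dM) = ∑ i : ZMod ℓ, dM i * dN i := by
    rw [Module.finrank_pi_fintype]
    exact Finset.sum_congr rfl fun i _ => by
      rw [Module.finrank_linearMap, Module.finrank_fin_fun, Module.finrank_fin_fun,
        Nat.mul_comm]
  have hF : finrank ℂ (Fmod ℓ dM dN)
      = (∑ i : ZMod ℓ, dM (i + 1) * dN i) + ∑ i : ZMod ℓ, dM i * dN (i + 1) := by
    rw [Module.finrank_prod, Module.finrank_pi_fintype, Module.finrank_pi_fintype]
    congr 1
    · exact Finset.sum_congr rfl fun i _ => by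
        rw [Module.finrank_linearMap, Module.finrank_fin_fun, Module.finrank_fin_fun]
    · exact Finset.sum_congr rfl fun i _ => by
        rw [Module.finrank_linearMap, Module.finrank_fin_fun, Module.finrank_fin_fun]
  omega

/- quadratic form section -/



def qform (ℓ : ℕ) [NeZero ℓ] (x y : ZMod ℓ → ℤ) : ℤ :=
  ∑ i : ZMod ℓ, (x i - x (i + 1)) * (y i - y (i + 1))

lemma qform_expand (x y : ZMod ℓ → ℤ) :
    qform ℓ x y = 2 * (∑ i : ZMod ℓ, x i * y i) - (∑ i : ZMod ℓ, x (i + 1) * y i)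
      - ∑ i : ZMod ℓ, x i * y (i + 1) := by
  unfold qform
  have e : ∑ i : ZMod ℓ, x (i + 1) * y (i + 1) = ∑ i : ZMod ℓ, x i * y i :=
    Fintype.sum_equiv (Equiv.addRight 1) _ _ fun i => rfl
  calc ∑ i : ZMod ℓ, (x i - x (i + 1)) * (y i - y (i + 1))
      = ∑ i : ZMod ℓ,
          (x i * y i + x (i + 1) * y (i + 1) - x (i + 1) * y i - x i * y (i + 1)) :=
        Finset.sum_congr rfl fun i _ => by ring
    _ = (∑ i : ZMod ℓ, x i * y i) + (∑ i : ZMod ℓ, x (i + 1) * y (i + 1))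
          - (∑ i : ZMod ℓ, x (i + 1) * y i) - ∑ i : ZMod ℓ, x i * y (i + 1) := by
        rw [Finset.sum_sub_distrib, Finset.sum_sub_distrib, Finset.sum_add_distrib]
    _ = _ := by rw [e]; ring

lemma qform_bilin {k : ℕ} (s1 s2 : Finset (Fin k)) (c1 c2 : Fin k → ℤ)
    (D : Fin k → ZMod ℓ → ℤ) :
    qform ℓ (fun i => ∑ t ∈ s1, c1 t * D t i) (fun i => ∑ t ∈ s2, c2 t * D t i)
    = ∑ t ∈ s1, ∑ s ∈ s2, (c1 t * c2 s) * qform ℓ (D t) (D s) := by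
  unfold qform
  have h1 : ∀ i : ZMod ℓ,
      ((∑ t ∈ s1, c1 t * D t i) - ∑ t ∈ s1, c1 t * D t (i + 1))
        = ∑ t ∈ s1, c1 t * (D t i - D t (i + 1)) := by
    intro i
    rw [← Finset.sum_sub_distrib]
    exact Finset.sum_congr rfl fun t _ => by ring
  have h2 : ∀ i : ZMod ℓ,
      ((∑ t ∈ s2, c2 t * D t i) - ∑ t ∈ s2, c2 t * D t (i + 1))
        = ∑ t ∈ s2, c2 t * (D t i - D t (i + 1)) := by
    intro i
    rw [← Finset.sum_sub_distrib]
    exact Finset.sum_congr rfl fun t _ => by ring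
  calc ∑ i : ZMod ℓ,
        ((∑ t ∈ s1, c1 t * D t i) - ∑ t ∈ s1, c1 t * D t (i + 1))
          * ((∑ t ∈ s2, c2 t * D t i) - ∑ t ∈ s2, c2 t * D t (i + 1))
      = ∑ i : ZMod ℓ, ∑ t ∈ s1, ∑ s ∈ s2,
          (c1 t * (D t i - D t (i + 1))) * (c2 s * (D s i - D s (i + 1))) := by
        refine Finset.sum_congr rfl fun i _ => ?_
        rw [h1 i, h2 i, Finset.sum_mul_sum]
    _ = ∑ t ∈ s1, ∑ i : ZMod ℓ, ∑ s ∈ s2,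
          (c1 t * (D t i - D t (i + 1))) * (c2 s * (D s i - D s (i + 1))) :=
        Finset.sum_comm
    _ = ∑ t ∈ s1, ∑ s ∈ s2, ∑ i : ZMod ℓ,
          (c1 t * (D t i - D t (i + 1))) * (c2 s * (D s i - D s (i + 1))) :=
        Finset.sum_congr rfl fun t _ => Finset.sum_comm
    _ = _ := by
        refine Finset.sum_congr rfl fun t _ => Finset.sum_congr rfl fun s _ => ?_
        rw [Finset.mul_sum]
        exact Finset.sum_congr rfl fun i _ => by ring

lemma qform_self_nonneg (x : ZMod ℓ → ℤ) : 0 ≤ qform ℓ x x :=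
  Finset.sum_nonneg fun i _ => mul_self_nonneg _

lemma const_of_step (u : ZMod ℓ → ℤ) (h : ∀ i, u i = u (i + 1)) : ∀ i, u i = u 0 := by
  have key : ∀ m : ℕ, u (m : ZMod ℓ) = u 0 := by
    intro m
    induction m with
    | zero => norm_num
    | succ m ih =>
      have e : ((m + 1 : ℕ) : ZMod ℓ) = (m : ZMod ℓ) + 1 := by push_cast; ring
      rw [e, ← h (m : ZMod ℓ), ih]
  intro i
  have : ((i.val : ℕ) : ZMod ℓ) = i := ZMod.natCast_rightInverse i
  rw [← this, key]



set_option maxHeartbeats 1000000 in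
/-- If `∑ θ_i ≠ 0`, the set `Σ_θ` of dimension vectors of simple
`θ`-representations is `ℤ`-linearly independent. -/
theorem sigma_linearly_independent (ℓ : ℕ) [NeZero ℓ] (θ : ZMod ℓ → ℂ)
    (ha : ∑ i : ZMod ℓ, θ i ≠ 0) (k : ℕ) (ds : Fin k → ZMod ℓ → ℕ)
    (hds : ∀ t, ∃ R : Rep ℓ θ (ds t), IsSimple R)
    (hinj : Function.Injective ds) (n : Fin k → ℤ)
    (hsum : (∑ t : Fin k, fun i => n t * (ds t i : ℤ)) = (0 : ZMod ℓ → ℤ)) :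
    ∀ t, n t = 0 := by
  classical
  set D : Fin k → ZMod ℓ → ℤ := fun t i => (ds t i : ℤ) with hD
  have hsum' : ∀ i : ZMod ℓ, ∑ t : Fin k, n t * D t i = 0 := by
    intro i
    have := congrFun hsum i
    simpa [Finset.sum_apply] using this
  have P1 : ∀ t, ∑ i : ZMod ℓ, θ i * (ds t i : ℂ) = 0 := by
    intro t
    obtain ⟨R, _⟩ := hds t
    exact theta_dot_dim (ds t) R
  have P3 : ∀ t, 0 < ∑ i : ZMod ℓ, D t i := by
    intro t
    obtain ⟨R, hR⟩ := hds t
    obtain ⟨i0, hi0⟩ := hR.1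
    refine Finset.sum_pos' (fun i _ => by simp [hD]) ⟨i0, Finset.mem_univ i0, ?_⟩
    simp only [hD]
    exact_mod_cast Nat.pos_of_ne_zero hi0
  have P2 : ∀ t u : Fin k, t ≠ u → qform ℓ (D t) (D u) ≤ 0 := by
    intro t u htu
    obtain ⟨Rt, hRt⟩ := hds t
    obtain ⟨Ru, hRu⟩ := hds u
    have hne : ds t ≠ ds u := fun e => htu (hinj e)
    have hle := dim_ineq Rt Ru hRt hRu hne
    have hle' : 2 * (∑ i : ZMod ℓ, D t i * D u i)
        ≤ (∑ i : ZMod ℓ, D t (i + 1) * D u i) + ∑ i : ZMod ℓ, D t i * D u (i + 1) := by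
      simp only [hD]
      exact_mod_cast hle
    rw [qform_expand]
    omega
  set P : Finset (Fin k) := Finset.univ.filter (fun t => 0 < n t) with hP
  set Ng : Finset (Fin k) := Finset.univ.filter (fun t => n t < 0) with hNg
  set u : ZMod ℓ → ℤ := fun i => ∑ t ∈ P, n t * D t i with hu
  have hdisj : Disjoint P Ng := by
    rw [Finset.disjoint_left]
    intro t htP htN
    rw [hP, Finset.mem_filter] at htP
    rw [hNg, Finset.mem_filter] at htN
    omega
  have hsplit : ∀ i : ZMod ℓ, (∑ t ∈ P, n t * D t i) + ∑ t ∈ Ng, n t * D t i = 0 := by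
    intro i
    have e : ∑ t ∈ P ∪ Ng, n t * D t i = ∑ t : Fin k, n t * D t i := by
      refine Finset.sum_subset (Finset.subset_univ _) ?_
      intro t _ htn
      rw [Finset.mem_union, hP, hNg, Finset.mem_filter, Finset.mem_filter] at htn
      push_neg at htn
      have h1 := htn.1 (Finset.mem_univ t)
      have h2 := htn.2 (Finset.mem_univ t)
      have : n t = 0 := by omega
      rw [this, zero_mul]
    rw [← Finset.sum_union hdisj, e, hsum' i]
  have huN : u = fun i => ∑ t ∈ Ng, (-(n t)) * D t i := by
    funext i
    have h1 := hsplit i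
    have h2 : ∑ t ∈ Ng, (-(n t)) * D t i = -∑ t ∈ Ng, n t * D t i := by
      rw [← Finset.sum_neg_distrib]
      exact Finset.sum_congr rfl fun t _ => by ring
    rw [hu]
    simp only [h2]
    omega
  have hq0 : qform ℓ u u = 0 := by
    have hle : qform ℓ u u ≤ 0 := by
      have e : qform ℓ u u
          = ∑ t ∈ P, ∑ s ∈ Ng, (n t * (-(n s))) * qform ℓ (D t) (D s) := by
        nth_rewrite 2 [huN]
        rw [hu]
        exact qform_bilin P Ng n (fun s => -(n s)) D
      rw [e]
      refine Finset.sum_nonpos fun t htP => Finset.sum_nonpos fun s hsN => ?_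
      rw [hP, Finset.mem_filter] at htP
      rw [hNg, Finset.mem_filter] at hsN
      have hts : t ≠ s := by
        intro hh
        rw [hh] at htP
        omega
      have hq := P2 t s hts
      have hpos : 0 ≤ n t * (-(n s)) := by
        have := htP.2
        have := hsN.2
        nlinarith
      exact mul_nonpos_of_nonneg_of_nonpos hpos hq
    exact le_antisymm hle (qform_self_nonneg u)
  have hstep : ∀ i, u i = u (i + 1) := by
    intro i
    have := (Finset.sum_eq_zero_iff_of_nonneg
      (fun i _ => mul_self_nonneg ((u i - u (i + 1))))).mp hq0 i (Finset.mem_univ i)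
    have h2 : u i - u (i + 1) = 0 := by nlinarith
    omega
  have hconst := const_of_step u hstep
  have hθu : (∑ i : ZMod ℓ, θ i) * ((u 0 : ℤ) : ℂ) = 0 := by
    have e1 : ∑ i : ZMod ℓ, θ i * ((u i : ℤ) : ℂ) = (∑ i : ZMod ℓ, θ i) * ((u 0 : ℤ) : ℂ) := by
      rw [Finset.sum_mul]
      exact Finset.sum_congr rfl fun i _ => by rw [hconst i]
    rw [← e1]
    calc ∑ i : ZMod ℓ, θ i * ((u i : ℤ) : ℂ)
        = ∑ i : ZMod ℓ, ∑ t ∈ P, ((n t : ℂ) * (θ i * (ds t i : ℂ))) := by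
          refine Finset.sum_congr rfl fun i _ => ?_
          rw [hu]
          simp only [hD]
          push_cast
          rw [Finset.mul_sum]
          exact Finset.sum_congr rfl fun t _ => by ring
      _ = ∑ t ∈ P, (n t : ℂ) * ∑ i : ZMod ℓ, θ i * (ds t i : ℂ) := by
          rw [Finset.sum_comm]
          exact Finset.sum_congr rfl fun t _ => by rw [Finset.mul_sum]
      _ = 0 := Finset.sum_eq_zero fun t _ => by rw [P1 t, mul_zero]
  have hu0 : u 0 = 0 := by
    rcases mul_eq_zero.mp hθu with h | h
    · exact absurd h ha
    · exact_mod_cast h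
  have huz : ∀ i, u i = 0 := fun i => by rw [hconst i, hu0]
  have hPempty : P = ∅ := by
    by_contra hne
    have hpos : 0 < ∑ i : ZMod ℓ, u i := by
      have e : ∑ i : ZMod ℓ, u i = ∑ t ∈ P, n t * ∑ i : ZMod ℓ, D t i := by
        rw [hu]
        rw [Finset.sum_comm]
        exact Finset.sum_congr rfl fun t _ => by rw [Finset.mul_sum]
      rw [e]
      refine Finset.sum_pos (fun t htP => ?_) (Finset.nonempty_of_ne_empty hne)
      rw [hP, Finset.mem_filter] at htP
      exact mul_pos htP.2 (P3 t)
    rw [Finset.sum_congr rfl fun i _ => huz i] at hpos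
    simp at hpos
  have hNempty : Ng = ∅ := by
    by_contra hne
    have hpos : 0 < ∑ i : ZMod ℓ, u i := by
      have e : ∑ i : ZMod ℓ, u i = ∑ t ∈ Ng, (-(n t)) * ∑ i : ZMod ℓ, D t i := by
        rw [huN]
        rw [Finset.sum_comm]
        exact Finset.sum_congr rfl fun t _ => by rw [Finset.mul_sum]
      rw [e]
      refine Finset.sum_pos (fun t htN => ?_) (Finset.nonempty_of_ne_empty hne)
      rw [hNg, Finset.mem_filter] at htN
      have : 0 < -(n t) := by omega
      exact mul_pos this (P3 t)
    rw [Finset.sum_congr rfl fun i _ => huz i] at hpos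
    simp at hpos
  intro t
  by_contra hn
  rcases lt_or_gt_of_ne hn with h | h
  · have : t ∈ Ng := by
      rw [hNg, Finset.mem_filter]
      exact ⟨Finset.mem_univ t, h⟩
    rw [hNempty] at this
    exact absurd this (Finset.notMem_empty t)
  · have : t ∈ P := by
      rw [hP, Finset.mem_filter]
      exact ⟨Finset.mem_univ t, h⟩
    rw [hPempty] at this
    exact absurd this (Finset.notMem_empty t)

end CM
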